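/- Let t ≥ 3 be an integer and set ε = 1/(100t²). There exists M = M(t) such that the following holds for all m ≥ M. Let T' be a tournament on m vertices containing no copy of the unavoidable t-tournament 𝒰_t, let σ be an ordering of V(T') minimising the number of backward edges, and suppose no vertex of T' is incident to more than 2εm backward edges in σ. Then there do not exist two disjoint t-sets A, B ⊆ V(T') such that every vertex of A precedes every vertex of B in σ, the induced subtournaments T'[A] and T'[B] are both transitive, and all t² edges between A and B are backward edges in σ of length at least m/20 (i.e., directed from B to A). -/

import Mathlib

/-- `T` is a tournament: an orientation of the complete graph. -/
def IsTournament {V : Type*} (T : V → V → Prop) : Prop :=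
  (∀ x, ¬ T x x) ∧ ∀ x y, x ≠ y → (T x y ↔ ¬ T y x)

/-- The unavoidable `t`-tournament `𝒰_t` on `Fin 3 × Fin t`: three transitive classes
of order `t`, with all edges from class `i` to class `i + 1` (mod 3). -/
def UPat (t : ℕ) (p q : Fin 3 × Fin t) : Prop :=
  (p.1 = q.1 ∧ p.2 < q.2) ∨ q.1 = p.1 + 1

/-- `T` contains a copy of the unavoidable `t`-tournament `𝒰_t`. -/
def ContainsU {V : Type*} (T : V → V → Prop) (t : ℕ) : Prop :=
  ∃ f : Fin 3 × Fin t → V, Function.Injective f ∧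
    ∀ p q : Fin 3 × Fin t, UPat t p q → T (f p) (f q)

/-- The number of backward edges of the ordering `σ` of the vertices of `T`
(position `k` is occupied by the vertex `σ k`). -/
noncomputable def backCount {n : ℕ} {V : Type*} (T : V → V → Prop) (σ : Fin n ≃ V) : ℕ :=
  {p : Fin n × Fin n | p.1 < p.2 ∧ T (σ p.2) (σ p.1)}.ncard

set_option linter.unusedSectionVars false

section Aux

variable {V : Type*} [DecidableEq V] {T : V → V → Prop}

lemma tour_total (hT : IsTournament T) {x y : V} (h : x ≠ y) (hxy : ¬ T x y) : T y x := by
  by_contra h'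
  exact hxy ((hT.2 x y h).mpr h')

lemma tour_asymm (hT : IsTournament T) {x y : V} (h : x ≠ y) (hxy : T x y) : ¬ T y x :=
  (hT.2 x y h).mp hxy

/-- Ramsey for tournaments: `2^n` vertices contain a transitive set of size `n+1`. -/
lemma tourRamsey [DecidableRel T] (hT : IsTournament T) :
    ∀ (n : ℕ) (S : Finset V), 2 ^ n ≤ S.card →
      ∃ C ⊆ S, C.card = n + 1 ∧ ∀ x ∈ C, ∀ y ∈ C, ∀ z ∈ C, T x y → T y z → T x z := by
  intro n
  induction n with
  | zero =>
    intro S hS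
    have h1 : 1 ≤ S.card := by simpa using hS
    obtain ⟨v, hv⟩ := Finset.card_pos.mp h1
    refine ⟨{v}, Finset.singleton_subset_iff.mpr hv, rfl, ?_⟩
    intro x hx y hy z hz hxy hyz
    rw [Finset.mem_singleton] at hx hy
    rw [hx, hy] at hxy
    exact absurd hxy (hT.1 v)
  | succ n ih =>
    intro S hS
    obtain ⟨v, hv⟩ := Finset.card_pos.mp (lt_of_lt_of_le (Nat.two_pow_pos (n + 1)) hS)
    set Out := (S.erase v).filter (fun u => T v u) with hOut
    set Inn := (S.erase v).filter (fun u => T u v) with hInn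
    have hcover : S.erase v ⊆ Out ∪ Inn := by
      intro u hu
      have hne : u ≠ v := Finset.ne_of_mem_erase hu
      rcases Classical.em (T v u) with h | h
      · exact Finset.mem_union_left _ (Finset.mem_filter.mpr ⟨hu, h⟩)
      · exact Finset.mem_union_right _ (Finset.mem_filter.mpr ⟨hu, tour_total hT (Ne.symm hne) h⟩)
    have hcard : 2 ^ n ≤ Out.card ∨ 2 ^ n ≤ Inn.card := by
      by_contra hc
      push_neg at hc
      have h1 : (S.erase v).card ≤ Out.card + Inn.card :=
        le_trans (Finset.card_le_card hcover) (Finset.card_union_le _ _)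
      have h2 : (S.erase v).card = S.card - 1 := Finset.card_erase_of_mem hv
      have h3 : 2 ^ (n + 1) = 2 ^ n + 2 ^ n := by ring
      omega
    rcases hcard with h | h
    · obtain ⟨C, hCO, hCc, hCt⟩ := ih Out h
      have hvC : v ∉ C := fun hvc =>
        Finset.notMem_erase v S (Finset.mem_of_mem_filter v (hCO hvc))
      have hCS : C ⊆ S := fun x hx =>
        Finset.mem_of_mem_erase (Finset.mem_of_mem_filter x (hCO hx))
      have hvout : ∀ u ∈ C, T v u := fun u hu => (Finset.mem_filter.mp (hCO hu)).2
      have hneC : ∀ u ∈ C, u ≠ v := fun u hu h => hvC (h ▸ hu)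
      refine ⟨insert v C, Finset.insert_subset hv hCS, ?_, ?_⟩
      · rw [Finset.card_insert_of_notMem hvC, hCc]
      · intro x hx y hy z hz hxy hyz
        rcases Finset.mem_insert.mp hx with hxv | hx
        · rcases Finset.mem_insert.mp hz with hzv | hz
          · rcases Finset.mem_insert.mp hy with hyv | hy
            · rw [hxv, hyv] at hxy; exact absurd hxy (hT.1 v)
            · rw [hzv] at hyz
              exact absurd hyz (tour_asymm hT (Ne.symm (hneC y hy)) (hvout y hy))
          · rw [hxv]; exact hvout z hz
        · rcases Finset.mem_insert.mp hy with hyv | hy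
          · rw [hyv] at hxy
            exact absurd hxy (tour_asymm hT (Ne.symm (hneC x hx)) (hvout x hx))
          · rcases Finset.mem_insert.mp hz with hzv | hz
            · rw [hzv] at hyz
              exact absurd hyz (tour_asymm hT (Ne.symm (hneC y hy)) (hvout y hy))
            · exact hCt x hx y hy z hz hxy hyz
    · obtain ⟨C, hCO, hCc, hCt⟩ := ih Inn h
      have hvC : v ∉ C := fun hvc =>
        Finset.notMem_erase v S (Finset.mem_of_mem_filter v (hCO hvc))
      have hCS : C ⊆ S := fun x hx =>
        Finset.mem_of_mem_erase (Finset.mem_of_mem_filter x (hCO hx))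
      have hvin : ∀ u ∈ C, T u v := fun u hu => (Finset.mem_filter.mp (hCO hu)).2
      have hneC : ∀ u ∈ C, u ≠ v := fun u hu h => hvC (h ▸ hu)
      refine ⟨insert v C, Finset.insert_subset hv hCS, ?_, ?_⟩
      · rw [Finset.card_insert_of_notMem hvC, hCc]
      · intro x hx y hy z hz hxy hyz
        rcases Finset.mem_insert.mp hx with hxv | hx
        · rcases Finset.mem_insert.mp hy with hyv | hy
          · rw [hxv, hyv] at hxy; exact absurd hxy (hT.1 v)
          · rw [hxv] at hxy
            exact absurd hxy (tour_asymm hT (hneC y hy) (hvin y hy))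
        · rcases Finset.mem_insert.mp hz with hzv | hz
          · rw [hzv]; exact hvin x hx
          · rcases Finset.mem_insert.mp hy with hyv | hy
            · rw [hyv] at hyz
              exact absurd hyz (tour_asymm hT (hneC z hz) (hvin z hz))
            · exact hCt x hx y hy z hz hxy hyz

/-- A transitive finite tournament has a source. -/
lemma exists_source [DecidableRel T] (hT : IsTournament T) (C : Finset V) (hne : C.Nonempty)
    (htr : ∀ x ∈ C, ∀ y ∈ C, ∀ z ∈ C, T x y → T y z → T x z) :
    ∃ v ∈ C, ∀ u ∈ C, u ≠ v → T v u := by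
  obtain ⟨v, hv, hmax⟩ := Finset.exists_max_image C (fun v => (C.filter (fun u => T v u)).card) hne
  refine ⟨v, hv, ?_⟩
  intro u hu hne'
  by_contra h
  have huv : T u v := tour_total hT (fun h' => hne' h'.symm) h
  have hsub : insert v (C.filter (fun w => T v w)) ⊆ C.filter (fun w => T u w) := by
    intro w hw
    rcases Finset.mem_insert.mp hw with hwv | hw
    · rw [hwv]; exact Finset.mem_filter.mpr ⟨hv, huv⟩
    · obtain ⟨hwC, hvw⟩ := Finset.mem_filter.mp hw
      exact Finset.mem_filter.mpr ⟨hwC, htr u hu v hv w hwC huv hvw⟩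
  have hvnot : v ∉ C.filter (fun w => T v w) := fun hvm =>
    (hT.1 v) (Finset.mem_filter.mp hvm).2
  have h1 := Finset.card_le_card hsub
  rw [Finset.card_insert_of_notMem hvnot] at h1
  have h2 := hmax u hu
  omega

/-- A transitive tournament on `t` vertices can be enumerated increasingly. -/
lemma exists_enum [DecidableRel T] (hT : IsTournament T) :
    ∀ (t : ℕ) (C : Finset V), C.card = t →
      (∀ x ∈ C, ∀ y ∈ C, ∀ z ∈ C, T x y → T y z → T x z) →
      ∃ e : Fin t → V, (∀ i, e i ∈ C) ∧ Function.Injective e ∧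
        ∀ i j : Fin t, i < j → T (e i) (e j) := by
  intro t
  induction t with
  | zero =>
    intro C _ _
    exact ⟨Fin.elim0, fun i => i.elim0, fun i => i.elim0, fun i => i.elim0⟩
  | succ t ih =>
    intro C hc htr
    have hcpos : 0 < C.card := by omega
    obtain ⟨v, hv, hsrc⟩ := exists_source hT C (Finset.card_pos.mp hcpos) htr
    have hc' : (C.erase v).card = t := by rw [Finset.card_erase_of_mem hv]; omega
    have htr' : ∀ x ∈ C.erase v, ∀ y ∈ C.erase v, ∀ z ∈ C.erase v, T x y → T y z → T x z :=
      fun x hx y hy z hz => htr x (Finset.mem_of_mem_erase hx) y (Finset.mem_of_mem_erase hy)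
        z (Finset.mem_of_mem_erase hz)
    obtain ⟨e', hmem', hinj', hedge'⟩ := ih (C.erase v) hc' htr'
    refine ⟨Fin.cons v e', ?_, ?_, ?_⟩
    · intro i
      rcases Fin.eq_zero_or_eq_succ i with hi | ⟨i', hi⟩ <;> rw [hi]
      · simpa using hv
      · simpa using Finset.mem_of_mem_erase (hmem' i')
    · refine Fin.cons_injective_of_injective ?_ hinj'
      rintro ⟨j, hj⟩
      exact Finset.notMem_erase v C (hj ▸ hmem' j)
    · intro i j hij
      rcases Fin.eq_zero_or_eq_succ j with hj | ⟨j', hj⟩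
      · rw [hj] at hij; exact absurd hij (by simp [Fin.lt_def])
      · rcases Fin.eq_zero_or_eq_succ i with hi | ⟨i', hi⟩ <;> rw [hi, hj] <;>
          simp only [Fin.cons_zero, Fin.cons_succ]
        · refine hsrc _ (Finset.mem_of_mem_erase (hmem' j')) (Finset.ne_of_mem_erase (hmem' j'))
        · refine hedge' i' j' ?_
          rw [hi, hj, Fin.succ_lt_succ_iff] at hij
          exact hij

end Aux

/-- **Claim.** Let `t ≥ 3` and `ε = 1/(100t²)`. There is `M = M(t)` such that for all
`m ≥ M`: if `T'` is an `m`-vertex tournament with no copy of `𝒰_t`, `σ` minimises the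
number of backward edges, and no vertex is incident to more than `2εm` backward edges,
then there is no pair of disjoint transitive `t`-sets `A < B` (in `σ`) all of whose `t²`
connecting edges are backward edges of length at least `m/20`. -/
theorem statement13 (t : ℕ) (ht : 3 ≤ t) :
    ∃ M : ℕ, ∀ m : ℕ, M ≤ m →
      ∀ T : Fin m → Fin m → Prop, IsTournament T →
        ¬ ContainsU T t →
        ∀ σ : Equiv.Perm (Fin m),
          (∀ τ : Equiv.Perm (Fin m), backCount T σ ≤ backCount T τ) →
          (∀ v : Fin m,
            (({u : Fin m | ((σ.symm u : ℕ) < (σ.symm v : ℕ) ∧ T v u) ∨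
                ((σ.symm v : ℕ) < (σ.symm u : ℕ) ∧ T u v)}).ncard : ℝ) ≤
              2 * (1 / (100 * (t : ℝ) ^ 2)) * (m : ℝ)) →
          ¬ ∃ A B : Finset (Fin m), Disjoint A B ∧ A.card = t ∧ B.card = t ∧
              (∀ x ∈ A, ∀ y ∈ B, (σ.symm x : ℕ) < (σ.symm y : ℕ)) ∧
              (∀ x ∈ A, ∀ y ∈ A, ∀ z ∈ A, T x y → T y z → T x z) ∧
              (∀ x ∈ B, ∀ y ∈ B, ∀ z ∈ B, T x y → T y z → T x z) ∧
              (∀ x ∈ A, ∀ y ∈ B, T y x ∧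
                (m : ℝ) / 20 ≤ ((σ.symm y : ℕ) : ℝ) - ((σ.symm x : ℕ) : ℝ)) := by
  classical
  refine ⟨300 * 2 ^ t, ?_⟩
  intro m hm T hT hU σ _hmin hdeg
  rintro ⟨A, B, hAB, hA, hB, _hord, htA, htB, hedge⟩
  apply hU
  -- extreme positions
  have hAne : A.Nonempty := Finset.card_pos.mp (by omega)
  have hBne : B.Nonempty := Finset.card_pos.mp (by omega)
  obtain ⟨xM, hxM, hxMax⟩ := Finset.exists_max_image A (fun x => σ.symm x) hAne
  obtain ⟨yM, hyM, hyMin⟩ := Finset.exists_min_image B (fun y => σ.symm y) hBne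
  have hgap : (m : ℝ) / 20 ≤ ((σ.symm yM : ℕ) : ℝ) - ((σ.symm xM : ℕ) : ℝ) :=
    (hedge xM hxM yM hyM).2
  have hmR : (300 : ℝ) * 2 ^ t ≤ (m : ℝ) := by exact_mod_cast hm
  have h2t : (1 : ℝ) ≤ 2 ^ t := one_le_pow₀ (by norm_num)
  have hm0 : 0 < m := by
    have := Nat.two_pow_pos t; omega
  have hab : (σ.symm xM : ℕ) < (σ.symm yM : ℕ) := by
    have h0 : (0 : ℝ) < (m : ℝ) / 20 := by positivity
    have h1 : ((σ.symm xM : ℕ) : ℝ) < ((σ.symm yM : ℕ) : ℝ) := by linarith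
    exact_mod_cast h1
  set a : Fin m := σ.symm xM with ha
  set b : Fin m := σ.symm yM with hb
  -- the middle interval
  set Mid : Finset (Fin m) := (Finset.Ioo a b).image σ with hMid
  have hMidpos : ∀ c ∈ Mid, (a : ℕ) < (σ.symm c : ℕ) ∧ (σ.symm c : ℕ) < (b : ℕ) := by
    intro c hc
    obtain ⟨k, hk, rfl⟩ := Finset.mem_image.mp hc
    rw [Finset.mem_Ioo] at hk
    rw [Equiv.symm_apply_apply]
    exact ⟨Fin.lt_def.mp hk.1, Fin.lt_def.mp hk.2⟩
  have hMidcard : Mid.card = (b : ℕ) - (a : ℕ) - 1 := by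
    rw [hMid, Finset.card_image_of_injective _ σ.injective, Fin.card_Ioo]
  have hMidA : ∀ c ∈ Mid, c ∉ A := by
    intro c hc hcA
    have h1 := (hMidpos c hc).1
    have h2 := hxMax c hcA
    have h2' : (σ.symm c : ℕ) ≤ (a : ℕ) := by exact_mod_cast h2
    omega
  have hMidB : ∀ c ∈ Mid, c ∉ B := by
    intro c hc hcB
    have h1 := (hMidpos c hc).2
    have h2 := hyMin c hcB
    have h2' : (b : ℕ) ≤ (σ.symm c : ℕ) := by exact_mod_cast h2
    omega
  set β : ℝ := 2 * (1 / (100 * (t : ℝ) ^ 2)) * (m : ℝ) with hβ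
  -- few backward edges at each vertex of A and B
  have hbadA : ∀ x ∈ A, ((Mid.filter (fun c => T c x)).card : ℝ) ≤ β := by
    intro x hx
    refine le_trans ?_ (hdeg x)
    have hsub : ((Mid.filter (fun c => T c x)) : Set (Fin m)) ⊆
        {u : Fin m | ((σ.symm u : ℕ) < (σ.symm x : ℕ) ∧ T x u) ∨
          ((σ.symm x : ℕ) < (σ.symm u : ℕ) ∧ T u x)} := by
      intro c hc
      simp only [Finset.coe_filter, Set.mem_setOf_eq] at hc
      obtain ⟨hcMid, hTcx⟩ := hc
      have h1 := (hMidpos c hcMid).1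
      have h2 : (σ.symm x : ℕ) ≤ (a : ℕ) := by exact_mod_cast hxMax x hx
      exact Or.inr ⟨by omega, hTcx⟩
    have := Set.ncard_le_ncard hsub (Set.toFinite _)
    rw [Set.ncard_coe_finset] at this
    exact_mod_cast this
  have hbadB : ∀ y ∈ B, ((Mid.filter (fun c => T y c)).card : ℝ) ≤ β := by
    intro y hy
    refine le_trans ?_ (hdeg y)
    have hsub : ((Mid.filter (fun c => T y c)) : Set (Fin m)) ⊆
        {u : Fin m | ((σ.symm u : ℕ) < (σ.symm y : ℕ) ∧ T y u) ∨
          ((σ.symm y : ℕ) < (σ.symm u : ℕ) ∧ T u y)} := by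
      intro c hc
      simp only [Finset.coe_filter, Set.mem_setOf_eq] at hc
      obtain ⟨hcMid, hTyc⟩ := hc
      have h1 := (hMidpos c hcMid).2
      have h2 : (b : ℕ) ≤ (σ.symm y : ℕ) := by exact_mod_cast hyMin y hy
      exact Or.inl ⟨by omega, hTyc⟩
    have := Set.ncard_le_ncard hsub (Set.toFinite _)
    rw [Set.ncard_coe_finset] at this
    exact_mod_cast this
  -- the good set
  set G : Finset (Fin m) :=
    Mid.filter (fun c => (∀ x ∈ A, T x c) ∧ (∀ y ∈ B, T c y)) with hG
  have hGMid : G ⊆ Mid := Finset.filter_subset _ _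
  have hbadsub : Mid \ G ⊆
      (A.biUnion (fun x => Mid.filter (fun c => T c x))) ∪
      (B.biUnion (fun y => Mid.filter (fun c => T y c))) := by
    intro c hc
    obtain ⟨hcMid, hcG⟩ := Finset.mem_sdiff.mp hc
    rw [hG, Finset.mem_filter] at hcG
    have hnot : ¬ ((∀ x ∈ A, T x c) ∧ (∀ y ∈ B, T c y)) := fun h => hcG ⟨hcMid, h⟩
    by_cases hax : ∀ x ∈ A, T x c
    · have hby : ¬ ∀ y ∈ B, T c y := fun h => hnot ⟨hax, h⟩
      push_neg at hby
      obtain ⟨y, hy, hny⟩ := hby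
      have hyc : T y c := tour_total hT (fun h => hMidB c hcMid (h ▸ hy)) hny
      exact Finset.mem_union_right _
        (Finset.mem_biUnion.mpr ⟨y, hy, Finset.mem_filter.mpr ⟨hcMid, hyc⟩⟩)
    · push_neg at hax
      obtain ⟨x, hx, hnx⟩ := hax
      have hcx : T c x := tour_total hT (fun h => hMidA c hcMid (h ▸ hx)) hnx
      exact Finset.mem_union_left _
        (Finset.mem_biUnion.mpr ⟨x, hx, Finset.mem_filter.mpr ⟨hcMid, hcx⟩⟩)
  have hbadcard : ((Mid \ G).card : ℝ) ≤ 2 * (t : ℝ) * β := by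
    have hβ0 : 0 ≤ β := by
      rw [hβ]; positivity
    have h1 : ((A.biUnion (fun x => Mid.filter (fun c => T c x))).card : ℝ) ≤ (t : ℝ) * β := by
      have := Finset.card_biUnion_le (s := A) (t := fun x => Mid.filter (fun c => T c x))
      have h2 : ((∑ x ∈ A, (Mid.filter (fun c => T c x)).card : ℕ) : ℝ) ≤ (t : ℝ) * β := by
        push_cast
        calc ∑ x ∈ A, ((Mid.filter (fun c => T c x)).card : ℝ)
            ≤ ∑ _x ∈ A, β := Finset.sum_le_sum (fun x hx => hbadA x hx)
          _ = (t : ℝ) * β := by rw [Finset.sum_const, hA]; simp [nsmul_eq_mul]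
      exact le_trans (by exact_mod_cast this) h2
    have h1' : ((B.biUnion (fun y => Mid.filter (fun c => T y c))).card : ℝ) ≤ (t : ℝ) * β := by
      have := Finset.card_biUnion_le (s := B) (t := fun y => Mid.filter (fun c => T y c))
      have h2 : ((∑ y ∈ B, (Mid.filter (fun c => T y c)).card : ℕ) : ℝ) ≤ (t : ℝ) * β := by
        push_cast
        calc ∑ y ∈ B, ((Mid.filter (fun c => T y c)).card : ℝ)
            ≤ ∑ _y ∈ B, β := Finset.sum_le_sum (fun y hy => hbadB y hy)
          _ = (t : ℝ) * β := by rw [Finset.sum_const, hB]; simp [nsmul_eq_mul]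
      exact le_trans (by exact_mod_cast this) h2
    have h3 := Finset.card_le_card hbadsub
    have h4 := Finset.card_union_le (A.biUnion (fun x => Mid.filter (fun c => T c x)))
      (B.biUnion (fun y => Mid.filter (fun c => T y c)))
    have h5 : ((Mid \ G).card : ℝ) ≤
        ((A.biUnion (fun x => Mid.filter (fun c => T c x))).card : ℝ) +
        ((B.biUnion (fun y => Mid.filter (fun c => T y c))).card : ℝ) := by
      exact_mod_cast le_trans h3 h4
    linarith
  -- G is large
  have htR : (3 : ℝ) ≤ (t : ℝ) := by exact_mod_cast ht
  have h2tβ : 2 * (t : ℝ) * β ≤ (m : ℝ) / 75 := by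
    have heq : 2 * (t : ℝ) * β = (m : ℝ) / (25 * t) := by
      rw [hβ]; field_simp; ring
    rw [heq]
    exact div_le_div_of_nonneg_left (Nat.cast_nonneg m) (by norm_num) (by linarith)
  have hGeq : (G.card : ℝ) = (Mid.card : ℝ) - ((Mid \ G).card : ℝ) := by
    have := Finset.card_sdiff_add_card_eq_card hGMid
    have h' : (((Mid \ G).card + G.card : ℕ) : ℝ) = (Mid.card : ℝ) := by exact_mod_cast this
    push_cast at h'
    linarith
  have hMidR : ((Mid.card : ℕ) : ℝ) = ((b : ℕ) : ℝ) - ((a : ℕ) : ℝ) - 1 := by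
    rw [hMidcard]
    have : (a : ℕ) + 1 ≤ (b : ℕ) := hab
    push_cast [Nat.cast_sub (by omega : 1 ≤ (b : ℕ) - (a : ℕ)), Nat.cast_sub (le_of_lt hab)]
    ring
  have hGbig : (2 : ℝ) ^ (t - 1) ≤ (G.card : ℝ) := by
    have h1 : (2 : ℝ) ^ (t - 1) ≤ (2 : ℝ) ^ t :=
      pow_le_pow_right₀ (by norm_num) (Nat.sub_le t 1)
    have h2 : (m : ℝ) / 20 ≤ ((b : ℕ) : ℝ) - ((a : ℕ) : ℝ) := hgap
    linarith
  have hGnat : 2 ^ (t - 1) ≤ G.card := by exact_mod_cast hGbig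
  -- find a transitive set in the middle
  obtain ⟨C, hCG, hCcard, hCtrans⟩ := tourRamsey hT (t - 1) G hGnat
  have hCcard' : C.card = t := by rw [hCcard]; omega
  -- enumerations of A, B, C
  obtain ⟨eA, heAmem, heAinj, heAedge⟩ := exists_enum hT t A hA htA
  obtain ⟨eB, heBmem, heBinj, heBedge⟩ := exists_enum hT t B hB htB
  obtain ⟨eC, heCmem, heCinj, heCedge⟩ := exists_enum hT t C hCcard' hCtrans
  have hCMid : ∀ c ∈ C, c ∈ Mid := fun c hc => hGMid (hCG hc)
  have hCgood : ∀ c ∈ C, (∀ x ∈ A, T x c) ∧ (∀ y ∈ B, T c y) := fun c hc =>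
    (Finset.mem_filter.mp (hCG hc)).2
  have hneAC : ∀ i j : Fin t, eA i ≠ eC j := by
    intro i j h
    exact hMidA _ (hCMid _ (heCmem j)) (by rw [← h] at *; exact heAmem i)
  have hneBC : ∀ i j : Fin t, eB i ≠ eC j := by
    intro i j h
    exact hMidB _ (hCMid _ (heCmem j)) (by rw [← h] at *; exact heBmem i)
  have hneAB : ∀ i j : Fin t, eA i ≠ eB j := by
    intro i j h
    exact Finset.disjoint_left.mp hAB (heAmem i) (by rw [h]; exact heBmem j)
  refine ⟨fun p => ![eA, eC, eB] p.1 p.2, ?_, ?_⟩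
  · rintro ⟨p1, p2⟩ ⟨q1, q2⟩ h
    simp only at h
    fin_cases p1 <;> fin_cases q1 <;>
        simp only [Matrix.cons_val_zero, Matrix.cons_val_one, Matrix.head_cons,
          Matrix.cons_val_two, Matrix.tail_cons, Prod.mk.injEq] at h ⊢
    · exact ⟨trivial, heAinj h⟩
    · exact absurd h (hneAC p2 q2)
    · exact absurd h (hneAB p2 q2)
    · exact absurd h.symm (hneAC q2 p2)
    · exact ⟨trivial, heCinj h⟩
    · exact absurd h.symm (hneBC q2 p2)
    · exact absurd h.symm (hneAB q2 p2)
    · exact absurd h (hneBC p2 q2)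
    · exact ⟨trivial, heBinj h⟩
  · rintro ⟨p1, p2⟩ ⟨q1, q2⟩ hpq
    rcases hpq with ⟨h1, h2⟩ | h1
    · simp only at h1 h2
      subst h1
      fin_cases p1 <;>
          simp only [Matrix.cons_val_zero, Matrix.cons_val_one, Matrix.head_cons,
            Matrix.cons_val_two, Matrix.tail_cons]
      · exact heAedge p2 q2 h2
      · exact heCedge p2 q2 h2
      · exact heBedge p2 q2 h2
    · simp only at h1
      fin_cases p1 <;> fin_cases q1 <;>
          simp only [Matrix.cons_val_zero, Matrix.cons_val_one, Matrix.head_cons,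
            Matrix.cons_val_two, Matrix.tail_cons] <;>
        first
          | exact absurd h1 (by decide)
          | skip
      · exact (hCgood _ (heCmem q2)).1 _ (heAmem p2)
      · exact (hCgood _ (heCmem p2)).2 _ (heBmem q2)
      · exact (hedge _ (heAmem q2) _ (heBmem p2)).1
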